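/- Let f : Z → ℝ ∪ {+∞} be proper, convex and norm lower semicontinuous, and assume inf_{w ∈ Z} ( f_z(w) + h(w) ) = 0 for every z ∈ Z. Then for every ε > 0 and every (x,x*) ∈ X × X* with f(x,x*) < ⟨x,x*⟩ + ε there exists (x_ε, x_ε*) ∈ M_f such that ‖x − x_ε‖² + ‖x* − x_ε*‖² < 4ε. -/

import Mathlib

open NormedSpace

noncomputable section

/-- The coupling `c(x, x*) := ⟨x, x*⟩` on `Z := X × X*`. -/
def coup (X : Type*) [NormedAddCommGroup X] [NormedSpace ℝ X]
    (z : X × StrongDual ℝ X) : ℝ := z.2 z.1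

/-- `h(x, x*) := ‖x‖²/2 + ‖x*‖²/2`. -/
def hfun (X : Type*) [NormedAddCommGroup X] [NormedSpace ℝ X]
    (z : X × StrongDual ℝ X) : ℝ := ‖z.1‖ ^ 2 / 2 + ‖z.2‖ ^ 2 / 2

/-- `M_f := {z | f z = c z}`. -/
def Mset (X : Type*) [NormedAddCommGroup X] [NormedSpace ℝ X]
    (f : X × StrongDual ℝ X → EReal) : Set (X × StrongDual ℝ X) :=
  {z | f z = ((coup X z : ℝ) : EReal)}

section Aux

variable {X : Type*} [NormedAddCommGroup X] [NormedSpace ℝ X]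

lemma coup_zero' : coup X (0 : X × StrongDual ℝ X) = 0 := by simp [coup]

lemma hfun_zero' : hfun X (0 : X × StrongDual ℝ X) = 0 := by simp [hfun]

lemma coup_add' (a b : X × StrongDual ℝ X) :
    coup X (a + b) = coup X a + a.2 b.1 + b.2 a.1 + coup X b := by
  simp only [coup, Prod.fst_add, Prod.snd_add, ContinuousLinearMap.add_apply, map_add]
  ring

lemma coup_smul' (t : ℝ) (w : X × StrongDual ℝ X) : coup X (t • w) = t ^ 2 * coup X w := by
  simp only [coup, Prod.smul_fst, Prod.smul_snd, ContinuousLinearMap.smul_apply, map_smul,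
    smul_eq_mul]
  ring

lemma hfun_smul' (t : ℝ) (ht : 0 ≤ t) (w : X × StrongDual ℝ X) :
    hfun X (t • w) = t ^ 2 * hfun X w := by
  simp only [hfun, Prod.smul_fst, Prod.smul_snd, norm_smul, Real.norm_eq_abs,
    abs_of_nonneg ht, mul_pow]
  ring

lemma coup_add_hfun_nonneg' (w : X × StrongDual ℝ X) : 0 ≤ coup X w + hfun X w := by
  have h2 : |w.2 w.1| ≤ ‖w.2‖ * ‖w.1‖ := by
    rw [← Real.norm_eq_abs]; exact w.2.le_opNorm w.1
  have := abs_le.mp h2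
  simp only [coup, hfun]
  nlinarith [norm_nonneg w.1, norm_nonneg w.2, sq_nonneg (‖w.1‖ - ‖w.2‖)]

variable (f : X × StrongDual ℝ X → EReal)
  (hne_bot : ∀ z, f z ≠ ⊥)
  (hconv : Convex ℝ {p : (X × StrongDual ℝ X) × ℝ | f p.1 ≤ (p.2 : EReal)})
  (hinf : ∀ z : X × StrongDual ℝ X,
      (⨅ w : X × StrongDual ℝ X,
        (f (z + w) - ((coup X (z + w) : ℝ) : EReal) + ((coup X w : ℝ) : EReal)
          + ((hfun X w : ℝ) : EReal))) = 0)

include hinf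

lemma lemA (z w : X × StrongDual ℝ X) :
    0 ≤ f (z + w) - ((coup X (z + w) : ℝ) : EReal) + ((coup X w : ℝ) : EReal)
          + ((hfun X w : ℝ) : EReal) := by
  conv_lhs => rw [← hinf z]
  exact iInf_le _ w

lemma lemB (z : X × StrongDual ℝ X) : ((coup X z : ℝ) : EReal) ≤ f z := by
  have h := lemA f hinf z 0
  simp only [add_zero, coup_zero', hfun_zero', EReal.coe_zero] at h
  have h2 : (coup X z : EReal) = 0 + (coup X z : ℝ) := by simp
  rw [h2]
  calc (0 : EReal) + (coup X z : ℝ) ≤ f z - (coup X z : ℝ) + (coup X z : ℝ) := by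
        exact add_le_add_left h _
    _ = f z + (-(coup X z : ℝ) + (coup X z : ℝ)) := by
        rw [sub_eq_add_neg, add_assoc]
    _ = f z := by norm_cast; simp

lemma lemC (z : X × StrongDual ℝ X) {δ : ℝ} (hδ : 0 < δ) :
    ∃ w : X × StrongDual ℝ X,
      f (z + w) - ((coup X (z + w) : ℝ) : EReal) + ((coup X w : ℝ) : EReal)
          + ((hfun X w : ℝ) : EReal) < (δ : EReal) := by
  have : (⨅ w : X × StrongDual ℝ X,
        (f (z + w) - ((coup X (z + w) : ℝ) : EReal) + ((coup X w : ℝ) : EReal)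
          + ((hfun X w : ℝ) : EReal))) < (δ : EReal) := by
    rw [hinf z]; exact_mod_cast EReal.coe_lt_coe_iff.mpr hδ
  exact iInf_lt_iff.mp this

include hne_bot hconv

/-- One step of the iteration: from a point where `f = c + β` we can move to a point
where `f = c + β'` with `β' ≤ δ`, moving by `w` with `h(w) ≤ 2(δ + β)`. -/
lemma step (z : X × StrongDual ℝ X) (β : ℝ)
    (hβ : f z = ((coup X z + β : ℝ) : EReal)) {δ : ℝ} (hδ : 0 < δ) :
    ∃ w : X × StrongDual ℝ X, ∃ β' : ℝ,
      f (z + w) = ((coup X (z + w) + β' : ℝ) : EReal) ∧ 0 ≤ β' ∧ β' ≤ δ ∧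
      hfun X w ≤ 2 * (δ + β) := by
  obtain ⟨w, hw⟩ := lemC f hinf z hδ
  have hTop : f (z + w) ≠ ⊤ := by
    intro h
    rw [h] at hw
    rw [EReal.top_sub_coe, EReal.top_add_coe, EReal.top_add_coe] at hw
    exact (not_top_lt hw)
  set φ := (f (z + w)).toReal with hφdef
  have hφ : f (z + w) = ((φ : ℝ) : EReal) := (EReal.coe_toReal hTop (hne_bot _)).symm
  rw [hφ, ← EReal.coe_sub, ← EReal.coe_add, ← EReal.coe_add, EReal.coe_lt_coe_iff] at hw
  set β' := φ - coup X (z + w) with hβ'def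
  have hβ'0 : 0 ≤ β' := by
    have := lemB f hinf (z + w)
    rw [hφ, EReal.coe_le_coe_iff] at this
    simp [hβ'def]; linarith
  have hch := coup_add_hfun_nonneg' w
  refine ⟨w, β', by rw [hφ]; norm_cast; rw [hβ'def]; ring, hβ'0, by linarith, ?_⟩
  set u := ((1:ℝ)/2) • w with hudef
  have hmem1 : ((z + w, φ) : (X × StrongDual ℝ X) × ℝ) ∈
      {p : (X × StrongDual ℝ X) × ℝ | f p.1 ≤ (p.2 : EReal)} := by
    simp only [Set.mem_setOf_eq, hφ]; exact le_refl _
  have hmem2 : ((z, coup X z + β) : (X × StrongDual ℝ X) × ℝ) ∈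
      {p : (X × StrongDual ℝ X) × ℝ | f p.1 ≤ (p.2 : EReal)} := by
    simp only [Set.mem_setOf_eq, hβ]; exact le_refl _
  have hmid := hconv hmem1 hmem2 (by norm_num : (0:ℝ) ≤ 1/2) (by norm_num : (0:ℝ) ≤ 1/2)
    (by norm_num)
  simp only [Set.mem_setOf_eq, Prod.smul_mk, Prod.mk_add_mk, smul_eq_mul] at hmid
  have hpt : ((1:ℝ)/2) • (z + w) + ((1:ℝ)/2) • z = z + u := by
    rw [hudef]; module
  rw [hpt] at hmid
  set R : ℝ := 1/2 * φ + 1/2 * (coup X z + β) with hRdef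
  have hA := lemA f hinf z u
  have hle : f (z + u) - ((coup X (z + u) : ℝ) : EReal) + ((coup X u : ℝ) : EReal)
      + ((hfun X u : ℝ) : EReal)
      ≤ ((R - coup X (z + u) + coup X u + hfun X u : ℝ) : EReal) := by
    push_cast
    gcongr
    · exact EReal.sub_le_sub hmid le_rfl
  have hreal : (0:ℝ) ≤ R - coup X (z + u) + coup X u + hfun X u := by
    have := le_trans hA hle
    exact_mod_cast this
  have e1 : coup X (z + w) = coup X z + z.2 w.1 + w.2 z.1 + coup X w := coup_add' z w
  have e2 : coup X (z + u) = coup X z + (1/2) * (z.2 w.1) + (1/2) * (w.2 z.1)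
      + (1/4) * coup X w := by
    rw [coup_add' z u, hudef, coup_smul']
    simp only [Prod.smul_fst, Prod.smul_snd, map_smul, ContinuousLinearMap.smul_apply,
      smul_eq_mul]
    ring
  have e3 : coup X u = (1/4) * coup X w := by
    rw [hudef, coup_smul']; ring
  have e4 : hfun X u = (1/4) * hfun X w := by
    rw [hudef, hfun_smul' _ (by norm_num)]; ring
  rw [e2, e3, e4, hRdef] at hreal
  linarith [hβ'def, e1, hw, hch, hβ'0, hreal]

end Aux

set_option maxHeartbeats 1000000

/-- Brøndsted–Rockafellar property: if `f : Z → ℝ ∪ {+∞}` is proper, convex,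
norm-lsc, and `inf_w (f_z(w) + h(w)) = 0` for every `z`, then for every `ε > 0` and
`(x, x*)` with `f(x, x*) < ⟨x, x*⟩ + ε` there is `(x_ε, x_ε*) ∈ M_f` with
`‖x - x_ε‖² + ‖x* - x_ε*‖² < 4ε`. -/
theorem stmt6 {X : Type*} [NormedAddCommGroup X] [NormedSpace ℝ X] [CompleteSpace X]
    (f : X × StrongDual ℝ X → EReal)
    (hne_bot : ∀ z, f z ≠ ⊥) (hproper : ∃ z, f z ≠ ⊤)
    (hconv : Convex ℝ {p : (X × StrongDual ℝ X) × ℝ | f p.1 ≤ (p.2 : EReal)})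
    (hlsc : LowerSemicontinuous f)
    (hinf : ∀ z : X × StrongDual ℝ X,
      (⨅ w : X × StrongDual ℝ X,
        (f (z + w) - ((coup X (z + w) : ℝ) : EReal) + ((coup X w : ℝ) : EReal)
          + ((hfun X w : ℝ) : EReal))) = 0)
    (ε : ℝ) (hε : 0 < ε) (z : X × StrongDual ℝ X)
    (hz : f z < ((coup X z + ε : ℝ) : EReal)) :
    ∃ w ∈ Mset X f, ‖z.1 - w.1‖ ^ 2 + ‖z.2 - w.2‖ ^ 2 < 4 * ε := by
  classical
  have hTop0 : f z ≠ ⊤ := ne_top_of_lt hz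
  have hfz : f z = (((f z).toReal : ℝ) : EReal) := (EReal.coe_toReal hTop0 (hne_bot z)).symm
  set β₀ : ℝ := (f z).toReal - coup X z with hβ₀def
  have hP0 : f z = ((coup X z + β₀ : ℝ) : EReal) := by
    rw [hfz]; norm_cast; rw [hβ₀def]; ring
  have hβ₀0 : 0 ≤ β₀ := by
    have := lemB f hinf z
    rw [hfz, EReal.coe_le_coe_iff] at this
    rw [hβ₀def]; linarith
  have hβ₀ε : β₀ < ε := by
    rw [hfz, EReal.coe_lt_coe_iff] at hz
    rw [hβ₀def]; linarith
  rcases eq_or_lt_of_le hβ₀0 with hb0 | hb0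
  · -- β₀ = 0 : z itself works
    refine ⟨z, ?_, ?_⟩
    · show f z = ((coup X z : ℝ) : EReal)
      rw [hP0, ← hb0]; norm_cast; ring
    · simp only [sub_self, norm_zero]
      norm_num
      positivity
  -- main case : 0 < β₀
  set s : ℝ := min (1/2) ((ε - β₀)/(8*ε)) with hsdef
  have hs0 : 0 < s := by
    apply lt_min (by norm_num)
    have : 0 < ε - β₀ := by linarith
    positivity
  have hs12 : s ≤ 1/2 := min_le_left _ _
  have hs1 : s < 1 := by linarith
  have hsε : 8 * ε * s ≤ ε - β₀ := by
    have h1 : s ≤ (ε - β₀)/(8*ε) := min_le_right _ _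
    rw [div_eq_mul_inv] at h1
    have h8 : (0:ℝ) < 8 * ε := by linarith
    calc 8 * ε * s ≤ 8 * ε * ((ε - β₀) * (8*ε)⁻¹) := by
          apply mul_le_mul_of_nonneg_left h1 (le_of_lt h8)
      _ = ε - β₀ := by field_simp
  set θ : ℝ := s ^ 2 with hθdef
  have hθ0 : 0 < θ := by positivity
  have hθ1 : θ < 1 := by nlinarith
  -- total step function
  have main_step : ∀ (k : ℕ) (p : (X × StrongDual ℝ X) × ℝ), ∃ q : (X × StrongDual ℝ X) × ℝ,
      (f p.1 = ((coup X p.1 + p.2 : ℝ) : EReal) →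
        (f q.1 = ((coup X q.1 + q.2 : ℝ) : EReal) ∧ 0 ≤ q.2 ∧ q.2 ≤ β₀ * θ ^ (k+1) ∧
          hfun X (q.1 - p.1) ≤ 2 * (β₀ * θ ^ (k+1) + p.2))) := by
    intro k p
    by_cases hp : f p.1 = ((coup X p.1 + p.2 : ℝ) : EReal)
    · obtain ⟨w, β', h1, h2, h3, h4⟩ := step f hne_bot hconv hinf p.1 p.2 hp
        (δ := β₀ * θ ^ (k+1)) (by positivity)
      refine ⟨(p.1 + w, β'), fun _ => ⟨h1, h2, h3, ?_⟩⟩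
      simpa [add_sub_cancel_left] using h4
    · exact ⟨p, fun h => absurd h hp⟩
  -- the iterated sequence
  obtain ⟨seq, hseq0, hseqS⟩ : ∃ seq : ℕ → (X × StrongDual ℝ X) × ℝ, seq 0 = (z, β₀) ∧
      ∀ k, seq (k+1) = Classical.choose (main_step k (seq k)) :=
    ⟨fun k => Nat.rec (z, β₀) (fun k ih => Classical.choose (main_step k ih)) k, rfl,
      fun k => rfl⟩
  have inv : ∀ k, f (seq k).1 = ((coup X (seq k).1 + (seq k).2 : ℝ) : EReal) ∧
      0 ≤ (seq k).2 ∧ (seq k).2 ≤ β₀ * θ ^ k := by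
    intro k
    induction k with
    | zero =>
      rw [hseq0]
      exact ⟨hP0, hβ₀0, by simp⟩
    | succ k ih =>
      have hspec := Classical.choose_spec (main_step k (seq k)) ih.1
      rw [← hseqS k] at hspec
      exact ⟨hspec.1, hspec.2.1, hspec.2.2.1⟩
  have disp : ∀ k, hfun X ((seq (k+1)).1 - (seq k).1) ≤ 2 * (β₀ * (1 + θ)) * θ ^ k := by
    intro k
    have hspec := Classical.choose_spec (main_step k (seq k)) (inv k).1
    rw [← hseqS k] at hspec
    have h4 := hspec.2.2.2
    have hk2 := (inv k).2.2
    calc hfun X ((seq (k+1)).1 - (seq k).1) ≤ 2 * (β₀ * θ ^ (k+1) + (seq k).2) := h4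
      _ ≤ 2 * (β₀ * θ ^ (k+1) + β₀ * θ ^ k) := by linarith
      _ = 2 * (β₀ * (1 + θ)) * θ ^ k := by ring
  -- geometric bounds on displacements
  set C : ℝ := 2 * Real.sqrt (β₀ * (1 + θ)) with hCdef
  have hC0 : 0 ≤ C := by positivity
  set a : ℕ → ℝ := fun k => ‖(seq (k+1)).1.1 - (seq k).1.1‖ with hadef
  set b : ℕ → ℝ := fun k => ‖(seq (k+1)).1.2 - (seq k).1.2‖ with hbdef
  have hab : ∀ k, a k ^ 2 + b k ^ 2 ≤ (C * s ^ k) ^ 2 := by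
    intro k
    have h := disp k
    simp only [hfun, Prod.fst_sub, Prod.snd_sub] at h
    have hCsq : C ^ 2 = 4 * (β₀ * (1 + θ)) := by
      rw [hCdef, mul_pow, Real.sq_sqrt (by positivity)]; ring
    have hθk : θ ^ k = (s ^ k) ^ 2 := by rw [hθdef, ← pow_mul, ← pow_mul, Nat.mul_comm]
    rw [mul_pow, hCsq, ← hθk]
    rw [hadef, hbdef]
    simp only
    nlinarith [h]
  have ha_le : ∀ k, a k ≤ C * s ^ k := by
    intro k
    have h := hab k
    have h1 : 0 ≤ a k := norm_nonneg _
    have h2 : 0 ≤ C * s ^ k := by positivity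
    nlinarith [sq_nonneg (b k)]
  have hb_le : ∀ k, b k ≤ C * s ^ k := by
    intro k
    have h := hab k
    have h1 : 0 ≤ b k := norm_nonneg _
    have h2 : 0 ≤ C * s ^ k := by positivity
    nlinarith [sq_nonneg (a k)]
  -- Cauchy sequence and limit
  set zs : ℕ → X × StrongDual ℝ X := fun k => (seq k).1 with hzsdef
  have hdist : ∀ k, dist (zs k) (zs (k+1)) ≤ C * s ^ k := by
    intro k
    rw [dist_eq_norm, Prod.norm_def]
    apply max_le
    · rw [← norm_neg]
      simpa [Prod.fst_sub, neg_sub] using ha_le k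
    · rw [← norm_neg]
      simpa [Prod.snd_sub, neg_sub] using hb_le k
  have hcauchy : CauchySeq zs := cauchySeq_of_le_geometric s C hs1 hdist
  obtain ⟨w, hwlim⟩ := cauchySeq_tendsto_of_complete hcauchy
  -- the limit point is in M_f
  have hβk0 : Filter.Tendsto (fun k => (seq k).2) Filter.atTop (nhds 0) := by
    have hup : Filter.Tendsto (fun k : ℕ => β₀ * θ ^ k) Filter.atTop (nhds 0) := by
      have := tendsto_pow_atTop_nhds_zero_of_lt_one (le_of_lt hθ0) hθ1
      simpa using this.const_mul β₀
    exact squeeze_zero (fun k => (inv k).2.1) (fun k => (inv k).2.2) hup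
  have hc_cont : Continuous (fun p : X × StrongDual ℝ X => coup X p) := by
    simp only [coup]
    exact isBoundedBilinearMap_apply.continuous.comp (continuous_snd.prodMk continuous_fst)
  have hccv : Filter.Tendsto (fun k => coup X (zs k)) Filter.atTop (nhds (coup X w)) :=
    (hc_cont.tendsto w).comp hwlim
  have hval : Filter.Tendsto (fun k => coup X (zs k) + (seq k).2) Filter.atTop
      (nhds (coup X w)) := by
    simpa using hccv.add hβk0
  have hMw : f w = ((coup X w : ℝ) : EReal) := by
    refine le_antisymm ?_ (lemB f hinf w)
    by_contra hcon
    push_neg at hcon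
    obtain ⟨y, hy1, hy2⟩ := EReal.lt_iff_exists_real_btwn.mp hcon
    have hy1' : coup X w < y := EReal.coe_lt_coe_iff.mp hy1
    have hev1 : ∀ᶠ k in Filter.atTop, (y : EReal) < f (zs k) :=
      hwlim.eventually (hlsc w y hy2)
    have hev2 : ∀ᶠ k in Filter.atTop, coup X (zs k) + (seq k).2 < y :=
      hval.eventually_lt_const hy1'
    obtain ⟨k, hk1, hk2⟩ := (hev1.and hev2).exists
    rw [(inv k).1] at hk1
    exact absurd (EReal.coe_lt_coe_iff.mp hk1) (not_lt.mpr (le_of_lt hk2))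
  refine ⟨w, hMw, ?_⟩
  -- the distance estimate via the complex-numbers trick
  set u : ℕ → ℂ := fun k => ⟨a k, b k⟩ with hudef
  have hnormu : ∀ k, ‖u k‖ ≤ C * s ^ k := by
    intro k
    have : ‖u k‖ ^ 2 ≤ (C * s ^ k) ^ 2 := by
      have h1 : ‖u k‖ ^ 2 = Complex.normSq (u k) := by
        rw [Complex.sq_norm]
      have h2 : Complex.normSq (u k) = a k * a k + b k * b k := Complex.normSq_mk _ _
      rw [h1, h2]
      nlinarith [hab k]
    have h1 : 0 ≤ ‖u k‖ := norm_nonneg _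
    have h2 : 0 ≤ C * s ^ k := by positivity
    nlinarith
  have hsumgeo : Summable (fun k : ℕ => C * s ^ k) :=
    (summable_geometric_of_lt_one (le_of_lt hs0) hs1).mul_left C
  have hsumnu : Summable (fun k => ‖u k‖) :=
    Summable.of_nonneg_of_le (fun k => norm_nonneg _) hnormu hsumgeo
  have hsumu : Summable u := Summable.of_norm hsumnu
  have hsuma : Summable a :=
    Summable.of_nonneg_of_le (fun k => norm_nonneg _) ha_le hsumgeo
  have hsumb : Summable b :=
    Summable.of_nonneg_of_le (fun k => norm_nonneg _) hb_le hsumgeo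
  set A : ℝ := ∑' k, a k with hAdef
  set B : ℝ := ∑' k, b k with hBdef
  have hUre : (∑' k, u k).re = A := by
    have h1 : Complex.reCLM (∑' k, u k) = ∑' k, Complex.reCLM (u k) :=
      Complex.reCLM.map_tsum hsumu
    simp only [Complex.reCLM_apply] at h1
    rw [h1, hAdef]
  have hUim : (∑' k, u k).im = B := by
    have h1 : Complex.imCLM (∑' k, u k) = ∑' k, Complex.imCLM (u k) :=
      Complex.imCLM.map_tsum hsumu
    simp only [Complex.imCLM_apply] at h1
    rw [h1, hBdef]
  have hABU : A ^ 2 + B ^ 2 = ‖∑' k, u k‖ ^ 2 := by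
    have h1 : ‖∑' k, u k‖ ^ 2 = Complex.normSq (∑' k, u k) := by
      rw [Complex.sq_norm]
    rw [h1, Complex.normSq_apply, hUre, hUim]
    ring
  have hUbound : ‖∑' k, u k‖ ≤ C * (1 - s)⁻¹ := by
    calc ‖∑' k, u k‖ ≤ ∑' k, ‖u k‖ := norm_tsum_le_tsum_norm hsumnu
      _ ≤ ∑' k : ℕ, C * s ^ k := Summable.tsum_le_tsum hnormu hsumnu hsumgeo
      _ = C * (1 - s)⁻¹ := by
          rw [tsum_mul_left, tsum_geometric_of_lt_one (le_of_lt hs0) hs1]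
  -- distance from z to w componentwise
  have hzs0 : zs 0 = z := by simp only [hzsdef]; rw [hseq0]
  have hz1 : ‖z.1 - w.1‖ ≤ A := by
    rw [← dist_eq_norm]
    have hlim1 : Filter.Tendsto (fun n => dist z.1 (zs n).1) Filter.atTop
        (nhds (dist z.1 w.1)) :=
      (Filter.Tendsto.dist tendsto_const_nhds ((continuous_fst.tendsto w).comp hwlim))
    refine le_of_tendsto hlim1 (Filter.Eventually.of_forall fun n => ?_)
    calc dist z.1 (zs n).1 = dist (zs 0).1 (zs n).1 := by rw [hzs0]
      _ ≤ ∑ i ∈ Finset.range n, dist (zs i).1 (zs (i+1)).1 :=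
          dist_le_range_sum_dist (fun i => (zs i).1) n
      _ = ∑ i ∈ Finset.range n, a i := by
          apply Finset.sum_congr rfl
          intro i _
          rw [dist_eq_norm, ← norm_neg, neg_sub]
      _ ≤ A := Summable.sum_le_tsum _ (fun i _ => norm_nonneg _) hsuma
  have hz2 : ‖z.2 - w.2‖ ≤ B := by
    rw [← dist_eq_norm]
    have hlim2 : Filter.Tendsto (fun n => dist z.2 (zs n).2) Filter.atTop
        (nhds (dist z.2 w.2)) :=
      (Filter.Tendsto.dist tendsto_const_nhds ((continuous_snd.tendsto w).comp hwlim))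
    refine le_of_tendsto hlim2 (Filter.Eventually.of_forall fun n => ?_)
    calc dist z.2 (zs n).2 = dist (zs 0).2 (zs n).2 := by rw [hzs0]
      _ ≤ ∑ i ∈ Finset.range n, dist (zs i).2 (zs (i+1)).2 :=
          dist_le_range_sum_dist (fun i => (zs i).2) n
      _ = ∑ i ∈ Finset.range n, b i := by
          apply Finset.sum_congr rfl
          intro i _
          rw [dist_eq_norm, ← norm_neg, neg_sub]
      _ ≤ B := Summable.sum_le_tsum _ (fun i _ => norm_nonneg _) hsumb
  have hA0 : 0 ≤ A := tsum_nonneg (fun k => norm_nonneg _)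
  have hB0 : 0 ≤ B := tsum_nonneg (fun k => norm_nonneg _)
  -- final numeric estimate
  have h1s : (0:ℝ) < 1 - s := by linarith
  have hnum : (C * (1 - s)⁻¹) ^ 2 < 4 * ε := by
    have hCsq : C ^ 2 = 4 * (β₀ * (1 + θ)) := by
      rw [hCdef, mul_pow, Real.sq_sqrt (by positivity)]; ring
    have hkey : β₀ * (1 + θ) < ε * (1 - s) ^ 2 := by
      rw [hθdef]
      nlinarith [sq_nonneg s, mul_pos hε (mul_pos hs0 hs0)]
    have : (C * (1 - s)⁻¹) ^ 2 = C ^ 2 / (1 - s) ^ 2 := by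
      rw [mul_pow, inv_pow, div_eq_mul_inv]
    rw [this, hCsq, div_lt_iff₀ (by positivity)]
    nlinarith
  calc ‖z.1 - w.1‖ ^ 2 + ‖z.2 - w.2‖ ^ 2 ≤ A ^ 2 + B ^ 2 := by
        have := pow_le_pow_left₀ (norm_nonneg _) hz1 2
        have := pow_le_pow_left₀ (norm_nonneg _) hz2 2
        linarith
    _ = ‖∑' k, u k‖ ^ 2 := hABU
    _ ≤ (C * (1 - s)⁻¹) ^ 2 := pow_le_pow_left₀ (norm_nonneg _) hUbound 2
    _ < 4 * ε := hnum
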